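/- Let C and D be split chain complexes and let f, f' : C → D be chain maps. Then f and f' are chain homotopic if and only if the restrictions f|_{C^ℓ} and f'|_{C^ℓ} are chain homotopic as chain maps C^ℓ → D^ℓ and the restrictions f|_{C^u} and f'|_{C^u} are chain homotopic as chain maps C^u → D^u. -/

import Mathlib

open CategoryTheory Limits

variable {R : Type} [Ring R]

/-- Admissibility: bounded between 0 and n, finitely generated free in each degree. -/
def IsAdmissible (n : ℕ) (C : ChainComplex (ModuleCat R) ℕ) : Prop :=
  (∀ i, n < i → IsZero (C.X i)) ∧
    (∀ i, Module.Finite R (C.X i)) ∧ (∀ i, Module.Free R (C.X i))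

/-- The lower half `C^ℓ` of a chain complex. -/
noncomputable def lowerHalf (n : ℕ) (C : ChainComplex (ModuleCat R) ℕ) :
    ChainComplex (ModuleCat R) ℕ :=
  ChainComplex.of
    (fun i => if 2 * i < n then C.X i else ModuleCat.of R PUnit)
    (fun i =>
      if h : 2 * (i + 1) < n then
        eqToHom (if_pos h) ≫ C.d (i + 1) i ≫ eqToHom (if_pos (by omega : 2 * i < n)).symm
      else 0)
    (fun i => by
      try dsimp only
      by_cases h : 2 * (i + 1 + 1) < n
      · simp only [dif_pos h, dif_pos (show 2 * (i + 1) < n by omega)]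
        simp
      · simp only [dif_neg h, zero_comp])

/-- The upper half `C^u` of a chain complex. -/
noncomputable def upperHalf (n : ℕ) (C : ChainComplex (ModuleCat R) ℕ) :
    ChainComplex (ModuleCat R) ℕ :=
  ChainComplex.of
    (fun i => if n < 2 * i then C.X i else ModuleCat.of R PUnit)
    (fun i =>
      if h : n < 2 * i then
        eqToHom (if_pos (by omega : n < 2 * (i + 1))) ≫ C.d (i + 1) i ≫ eqToHom (if_pos h).symm
      else 0)
    (fun i => by
      try dsimp only
      by_cases h : n < 2 * i
      · simp only [dif_pos h, dif_pos (show n < 2 * (i + 1) by omega)]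
        simp
      · simp only [dif_neg h, comp_zero])

/-- A chain complex splits if `C_{n/2} = 0` (n even) or `d_{⌈n/2⌉} = 0` (n odd). -/
def Splits (n : ℕ) (C : ChainComplex (ModuleCat R) ℕ) : Prop :=
  if Even n then IsZero (C.X (n / 2)) else C.d (n / 2 + 1) (n / 2) = 0

/-- The restriction of a chain map to the lower halves. -/
noncomputable def lowerMap (n : ℕ) {C D : ChainComplex (ModuleCat R) ℕ} (f : C ⟶ D) :
    lowerHalf n C ⟶ lowerHalf n D where
  f i :=
    if h : 2 * i < n then
      eqToHom (if_pos h) ≫ f.f i ≫ eqToHom (if_pos h).symm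
    else 0
  comm' := by
    rintro i j (rfl : j + 1 = i)
    show _ ≫ (lowerHalf n D).d (j + 1) j = (lowerHalf n C).d (j + 1) j ≫ _
    simp only [lowerHalf, ChainComplex.of_d]
    by_cases h : 2 * (j + 1) < n
    · have h' : 2 * j < n := by omega
      simp [h, h']
    · simp only [dif_neg h, zero_comp, comp_zero]

/-- The restriction of a chain map to the upper halves. -/
noncomputable def upperMap (n : ℕ) {C D : ChainComplex (ModuleCat R) ℕ} (f : C ⟶ D) :
    upperHalf n C ⟶ upperHalf n D where
  f i :=
    if h : n < 2 * i then
      eqToHom (if_pos h) ≫ f.f i ≫ eqToHom (if_pos h).symm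
    else 0
  comm' := by
    rintro i j (rfl : j + 1 = i)
    show _ ≫ (upperHalf n D).d (j + 1) j = (upperHalf n C).d (j + 1) j ≫ _
    simp only [upperHalf, ChainComplex.of_d]
    by_cases h : n < 2 * j
    · have h' : n < 2 * (j + 1) := by omega
      simp [h, h']
    · simp only [dif_neg h, zero_comp, comp_zero]


section Aux

lemma lowerHalf_X_isZero (n : ℕ) (C : ChainComplex (ModuleCat R) ℕ) (i : ℕ) (h : ¬ 2 * i < n) :
    IsZero ((lowerHalf n C).X i) := by
  show IsZero (if 2 * i < n then C.X i else ModuleCat.of R PUnit)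
  rw [if_neg h]
  exact ModuleCat.isZero_of_subsingleton _

lemma upperHalf_X_isZero (n : ℕ) (C : ChainComplex (ModuleCat R) ℕ) (i : ℕ) (h : ¬ n < 2 * i) :
    IsZero ((upperHalf n C).X i) := by
  show IsZero (if n < 2 * i then C.X i else ModuleCat.of R PUnit)
  rw [if_neg h]
  exact ModuleCat.isZero_of_subsingleton _

lemma lowerHalf_X_eq (n : ℕ) (C : ChainComplex (ModuleCat R) ℕ) (i : ℕ) (h : 2 * i < n) :
    (lowerHalf n C).X i = C.X i := if_pos h

lemma upperHalf_X_eq (n : ℕ) (C : ChainComplex (ModuleCat R) ℕ) (i : ℕ) (h : n < 2 * i) :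
    (upperHalf n C).X i = C.X i := if_pos h

lemma lowerHalf_d_eq (n : ℕ) (C : ChainComplex (ModuleCat R) ℕ) (i : ℕ) (h : 2 * (i + 1) < n) :
    (lowerHalf n C).d (i + 1) i =
      eqToHom (lowerHalf_X_eq n C (i + 1) h) ≫ C.d (i + 1) i ≫ eqToHom (lowerHalf_X_eq n C i (show 2 * i < n by omega)).symm := by
  simp only [lowerHalf, ChainComplex.of_d]
  rw [dif_pos h]

lemma lowerHalf_d_zero (n : ℕ) (C : ChainComplex (ModuleCat R) ℕ) (i : ℕ)
    (h : ¬ 2 * (i + 1) < n) : (lowerHalf n C).d (i + 1) i = 0 := by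
  simp only [lowerHalf, ChainComplex.of_d]
  rw [dif_neg h]
  rfl

lemma upperHalf_d_eq (n : ℕ) (C : ChainComplex (ModuleCat R) ℕ) (i : ℕ) (h : n < 2 * i) :
    (upperHalf n C).d (i + 1) i =
      eqToHom (upperHalf_X_eq n C (i + 1) (show n < 2 * (i + 1) by omega)) ≫ C.d (i + 1) i ≫
        eqToHom (upperHalf_X_eq n C i h).symm := by
  simp only [upperHalf, ChainComplex.of_d]
  rw [dif_pos h]

lemma upperHalf_d_zero (n : ℕ) (C : ChainComplex (ModuleCat R) ℕ) (i : ℕ)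
    (h : ¬ n < 2 * i) : (upperHalf n C).d (i + 1) i = 0 := by
  simp only [upperHalf, ChainComplex.of_d]
  rw [dif_neg h]
  rfl

lemma lowerMap_f_eq (n : ℕ) {C D : ChainComplex (ModuleCat R) ℕ} (f : C ⟶ D) (i : ℕ)
    (h : 2 * i < n) :
    (lowerMap n f).f i = eqToHom (lowerHalf_X_eq n C i h) ≫ f.f i ≫ eqToHom (lowerHalf_X_eq n D i h).symm := by
  simp only [lowerMap]
  rw [dif_pos h]

lemma upperMap_f_eq (n : ℕ) {C D : ChainComplex (ModuleCat R) ℕ} (f : C ⟶ D) (i : ℕ)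
    (h : n < 2 * i) :
    (upperMap n f).f i = eqToHom (upperHalf_X_eq n C i h) ≫ f.f i ≫ eqToHom (upperHalf_X_eq n D i h).symm := by
  simp only [upperMap]
  rw [dif_pos h]

/-- If `D` splits then any composite `g ≫ D.d (j+1) j` through the middle vanishes. -/
lemma splits_comp_d_zero {n : ℕ} {D : ChainComplex (ModuleCat R) ℕ} (hD : Splits n D)
    (j : ℕ) (h1 : 2 * j < n) (h2 : ¬ 2 * (j + 1) < n) {M : ModuleCat R}
    (g : M ⟶ D.X (j + 1)) : g ≫ D.d (j + 1) j = 0 := by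
  rcases Nat.even_or_odd n with he | ho
  · rw [Splits, if_pos he] at hD
    obtain ⟨k, hk⟩ := he
    have hj : j + 1 = n / 2 := by omega
    have hz : IsZero (D.X (j + 1)) := by rw [hj]; exact hD
    rw [hz.eq_of_tgt g 0, zero_comp]
  · rw [Splits, if_neg (by simpa [Nat.not_even_iff_odd] using ho)] at hD
    obtain ⟨k, hk⟩ := ho
    have hj : n / 2 = j := by omega
    rw [hj] at hD
    rw [hD, comp_zero]

/-- If `C` splits then any composite `C.d (j+1) j ≫ g` through the middle vanishes. -/
lemma splits_d_comp_zero {n : ℕ} {C : ChainComplex (ModuleCat R) ℕ} (hC : Splits n C)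
    (j : ℕ) (h1 : ¬ n < 2 * j) (h2 : n < 2 * (j + 1)) {M : ModuleCat R}
    (g : C.X j ⟶ M) : C.d (j + 1) j ≫ g = 0 := by
  rcases Nat.even_or_odd n with he | ho
  · rw [Splits, if_pos he] at hC
    obtain ⟨k, hk⟩ := he
    have hj : j = n / 2 := by omega
    have hz : IsZero (C.X j) := by rw [hj]; exact hC
    rw [hz.eq_of_tgt (C.d (j + 1) j) 0, zero_comp]
  · rw [Splits, if_neg (by simpa [Nat.not_even_iff_odd] using ho)] at hC
    obtain ⟨k, hk⟩ := ho
    have hj : n / 2 = j := by omega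
    rw [hj] at hC
    rw [hC, zero_comp]

/-- Restriction of a homotopy to the lower halves. -/
noncomputable def homotopyLower (n : ℕ) {C D : ChainComplex (ModuleCat R) ℕ}
    (hD : Splits n D) {f f' : C ⟶ D} (s : Homotopy f f') :
    Homotopy (lowerMap n f) (lowerMap n f') where
  hom i j :=
    if h : 2 * i < n ∧ 2 * j < n then
      eqToHom (lowerHalf_X_eq n C i h.1) ≫ s.hom i j ≫ eqToHom (lowerHalf_X_eq n D j h.2).symm
    else 0
  zero i j hij := by
    try dsimp only
    split
    · rw [s.zero i j hij]; simp
    · rfl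
  comm i := by
    by_cases hi : 2 * i < n
    · have hd : (dNext i fun i j =>
          if h : 2 * i < n ∧ 2 * j < n then
            eqToHom (lowerHalf_X_eq n C i h.1) ≫ s.hom i j ≫ eqToHom (lowerHalf_X_eq n D j h.2).symm
          else 0) =
          eqToHom (lowerHalf_X_eq n C i hi) ≫ dNext i s.hom ≫ eqToHom (lowerHalf_X_eq n D i hi).symm := by
        rcases i with _ | k
        · rw [Homotopy.dNext_zero_chainComplex, Homotopy.dNext_zero_chainComplex]
          simp
        · rw [Homotopy.dNext_succ_chainComplex, Homotopy.dNext_succ_chainComplex]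
          have hk : 2 * k < n := by omega
          rw [lowerHalf_d_eq n C k hi]
          try dsimp only
          rw [dif_pos ⟨hk, hi⟩]
          simp
      have hp : (prevD i fun i j =>
          if h : 2 * i < n ∧ 2 * j < n then
            eqToHom (lowerHalf_X_eq n C i h.1) ≫ s.hom i j ≫ eqToHom (lowerHalf_X_eq n D j h.2).symm
          else 0) =
          eqToHom (lowerHalf_X_eq n C i hi) ≫ prevD i s.hom ≫ eqToHom (lowerHalf_X_eq n D i hi).symm := by
        rw [Homotopy.prevD_chainComplex, Homotopy.prevD_chainComplex]
        by_cases h1 : 2 * (i + 1) < n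
        · rw [lowerHalf_d_eq n D i h1]
          try dsimp only
          rw [dif_pos ⟨hi, h1⟩]
          simp
        · have hz : s.hom i (i + 1) ≫ D.d (i + 1) i = 0 :=
            splits_comp_d_zero hD i hi h1 _
          rw [hz, lowerHalf_d_zero n D i h1]
          try dsimp only
          rw [dif_neg (by tauto : ¬ (2 * i < n ∧ 2 * (i + 1) < n))]
          simp
      rw [hd, hp, lowerMap_f_eq n f i hi, lowerMap_f_eq n f' i hi, s.comm i]
      simp only [Preadditive.comp_add, Preadditive.add_comp, Category.assoc]
    · exact (lowerHalf_X_isZero n D i hi).eq_of_tgt _ _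

/-- Restriction of a homotopy to the upper halves. -/
noncomputable def homotopyUpper (n : ℕ) {C D : ChainComplex (ModuleCat R) ℕ}
    (hC : Splits n C) {f f' : C ⟶ D} (s : Homotopy f f') :
    Homotopy (upperMap n f) (upperMap n f') where
  hom i j :=
    if h : n < 2 * i ∧ n < 2 * j then
      eqToHom (upperHalf_X_eq n C i h.1) ≫ s.hom i j ≫ eqToHom (upperHalf_X_eq n D j h.2).symm
    else 0
  zero i j hij := by
    try dsimp only
    split
    · rw [s.zero i j hij]; simp
    · rfl
  comm i := by
    by_cases hi : n < 2 * i
    · have hd : (dNext i fun i j =>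
          if h : n < 2 * i ∧ n < 2 * j then
            eqToHom (upperHalf_X_eq n C i h.1) ≫ s.hom i j ≫ eqToHom (upperHalf_X_eq n D j h.2).symm
          else 0) =
          eqToHom (upperHalf_X_eq n C i hi) ≫ dNext i s.hom ≫ eqToHom (upperHalf_X_eq n D i hi).symm := by
        rcases i with _ | k
        · rw [Homotopy.dNext_zero_chainComplex, Homotopy.dNext_zero_chainComplex]
          simp
        · rw [Homotopy.dNext_succ_chainComplex, Homotopy.dNext_succ_chainComplex]
          by_cases hk : n < 2 * k
          · rw [upperHalf_d_eq n C k hk]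
            try dsimp only
            rw [dif_pos ⟨hk, hi⟩]
            simp
          · have hz : C.d (k + 1) k ≫ s.hom k (k + 1) = 0 :=
              splits_d_comp_zero hC k hk hi _
            rw [hz, upperHalf_d_zero n C k hk]
            try dsimp only
            rw [dif_neg (by tauto : ¬ (n < 2 * k ∧ n < 2 * (k + 1)))]
            simp
      have hp : (prevD i fun i j =>
          if h : n < 2 * i ∧ n < 2 * j then
            eqToHom (upperHalf_X_eq n C i h.1) ≫ s.hom i j ≫ eqToHom (upperHalf_X_eq n D j h.2).symm
          else 0) =
          eqToHom (upperHalf_X_eq n C i hi) ≫ prevD i s.hom ≫ eqToHom (upperHalf_X_eq n D i hi).symm := by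
        rw [Homotopy.prevD_chainComplex, Homotopy.prevD_chainComplex]
        have h1 : n < 2 * (i + 1) := by omega
        rw [upperHalf_d_eq n D i hi]
        try dsimp only
        rw [dif_pos ⟨hi, h1⟩]
        simp
      rw [hd, hp, upperMap_f_eq n f i hi, upperMap_f_eq n f' i hi, s.comm i]
      simp only [Preadditive.comp_add, Preadditive.add_comp, Category.assoc]
    · exact (upperHalf_X_isZero n D i hi).eq_of_tgt _ _

/-- Assembling a homotopy from homotopies of the two halves. -/
noncomputable def homotopyOfHalves (n : ℕ) {C D : ChainComplex (ModuleCat R) ℕ}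
    (hC : Splits n C) {f f' : C ⟶ D}
    (sl : Homotopy (lowerMap n f) (lowerMap n f'))
    (su : Homotopy (upperMap n f) (upperMap n f')) :
    Homotopy f f' where
  hom i j :=
    if h : 2 * i < n ∧ 2 * j < n then
      eqToHom (lowerHalf_X_eq n C i h.1).symm ≫ sl.hom i j ≫ eqToHom (lowerHalf_X_eq n D j h.2)
    else if h' : n < 2 * i ∧ n < 2 * j then
      eqToHom (upperHalf_X_eq n C i h'.1).symm ≫ su.hom i j ≫ eqToHom (upperHalf_X_eq n D j h'.2)
    else 0
  zero i j hij := by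
    try dsimp only
    split
    · rw [sl.zero i j hij]; simp
    · split
      · rw [su.zero i j hij]; simp
      · rfl
  comm i := by
    by_cases hi : 2 * i < n
    · have hd : (dNext i fun i j =>
          if h : 2 * i < n ∧ 2 * j < n then
            eqToHom (lowerHalf_X_eq n C i h.1).symm ≫ sl.hom i j ≫ eqToHom (lowerHalf_X_eq n D j h.2)
          else if h' : n < 2 * i ∧ n < 2 * j then
            eqToHom (upperHalf_X_eq n C i h'.1).symm ≫ su.hom i j ≫ eqToHom (upperHalf_X_eq n D j h'.2)
          else 0) =
          eqToHom (lowerHalf_X_eq n C i hi).symm ≫ dNext i sl.hom ≫ eqToHom (lowerHalf_X_eq n D i hi) := by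
        rcases i with _ | k
        · rw [Homotopy.dNext_zero_chainComplex, Homotopy.dNext_zero_chainComplex]
          simp
        · rw [Homotopy.dNext_succ_chainComplex, Homotopy.dNext_succ_chainComplex]
          have hk : 2 * k < n := by omega
          rw [lowerHalf_d_eq n C k hi]
          try dsimp only
          rw [dif_pos ⟨hk, hi⟩]
          simp
      have hp : (prevD i fun i j =>
          if h : 2 * i < n ∧ 2 * j < n then
            eqToHom (lowerHalf_X_eq n C i h.1).symm ≫ sl.hom i j ≫ eqToHom (lowerHalf_X_eq n D j h.2)
          else if h' : n < 2 * i ∧ n < 2 * j then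
            eqToHom (upperHalf_X_eq n C i h'.1).symm ≫ su.hom i j ≫ eqToHom (upperHalf_X_eq n D j h'.2)
          else 0) =
          eqToHom (lowerHalf_X_eq n C i hi).symm ≫ prevD i sl.hom ≫ eqToHom (lowerHalf_X_eq n D i hi) := by
        rw [Homotopy.prevD_chainComplex, Homotopy.prevD_chainComplex]
        by_cases h1 : 2 * (i + 1) < n
        · rw [lowerHalf_d_eq n D i h1]
          try dsimp only
          rw [dif_pos ⟨hi, h1⟩]
          simp
        · rw [lowerHalf_d_zero n D i h1]
          try dsimp only
          rw [dif_neg (by tauto : ¬ (2 * i < n ∧ 2 * (i + 1) < n)),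
            dif_neg (by omega : ¬ (n < 2 * i ∧ n < 2 * (i + 1)))]
          simp
      have hf : f.f i = eqToHom (lowerHalf_X_eq n C i hi).symm ≫ (lowerMap n f).f i ≫ eqToHom (lowerHalf_X_eq n D i hi) := by
        rw [lowerMap_f_eq n f i hi]; simp
      have hf' : f'.f i =
          eqToHom (lowerHalf_X_eq n C i hi).symm ≫ (lowerMap n f').f i ≫ eqToHom (lowerHalf_X_eq n D i hi) := by
        rw [lowerMap_f_eq n f' i hi]; simp
      rw [hd, hp, hf, hf', sl.comm i]
      simp only [Preadditive.comp_add, Preadditive.add_comp, Category.assoc]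
    · by_cases hi' : n < 2 * i
      · have hd : (dNext i fun i j =>
            if h : 2 * i < n ∧ 2 * j < n then
              eqToHom (lowerHalf_X_eq n C i h.1).symm ≫ sl.hom i j ≫ eqToHom (lowerHalf_X_eq n D j h.2)
            else if h' : n < 2 * i ∧ n < 2 * j then
              eqToHom (upperHalf_X_eq n C i h'.1).symm ≫ su.hom i j ≫ eqToHom (upperHalf_X_eq n D j h'.2)
            else 0) =
            eqToHom (upperHalf_X_eq n C i hi').symm ≫ dNext i su.hom ≫ eqToHom (upperHalf_X_eq n D i hi') := by
          rcases i with _ | k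
          · rw [Homotopy.dNext_zero_chainComplex, Homotopy.dNext_zero_chainComplex]
            simp
          · rw [Homotopy.dNext_succ_chainComplex, Homotopy.dNext_succ_chainComplex]
            by_cases hk : n < 2 * k
            · rw [upperHalf_d_eq n C k hk]
              try dsimp only
              rw [dif_neg (by omega : ¬ (2 * k < n ∧ 2 * (k + 1) < n)),
                dif_pos ⟨hk, hi'⟩]
              simp
            · rw [upperHalf_d_zero n C k hk]
              try dsimp only
              rw [dif_neg (by omega : ¬ (2 * k < n ∧ 2 * (k + 1) < n)),
                dif_neg (by tauto : ¬ (n < 2 * k ∧ n < 2 * (k + 1)))]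
              simp
        have hp : (prevD i fun i j =>
            if h : 2 * i < n ∧ 2 * j < n then
              eqToHom (lowerHalf_X_eq n C i h.1).symm ≫ sl.hom i j ≫ eqToHom (lowerHalf_X_eq n D j h.2)
            else if h' : n < 2 * i ∧ n < 2 * j then
              eqToHom (upperHalf_X_eq n C i h'.1).symm ≫ su.hom i j ≫ eqToHom (upperHalf_X_eq n D j h'.2)
            else 0) =
            eqToHom (upperHalf_X_eq n C i hi').symm ≫ prevD i su.hom ≫ eqToHom (upperHalf_X_eq n D i hi') := by
          rw [Homotopy.prevD_chainComplex, Homotopy.prevD_chainComplex]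
          have h1 : n < 2 * (i + 1) := by omega
          rw [upperHalf_d_eq n D i hi']
          try dsimp only
          rw [dif_neg (by omega : ¬ (2 * i < n ∧ 2 * (i + 1) < n)), dif_pos ⟨hi', h1⟩]
          simp
        have hf : f.f i =
            eqToHom (upperHalf_X_eq n C i hi').symm ≫ (upperMap n f).f i ≫ eqToHom (upperHalf_X_eq n D i hi') := by
          rw [upperMap_f_eq n f i hi']; simp
        have hf' : f'.f i =
            eqToHom (upperHalf_X_eq n C i hi').symm ≫ (upperMap n f').f i ≫ eqToHom (upperHalf_X_eq n D i hi') := by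
          rw [upperMap_f_eq n f' i hi']; simp
        rw [hd, hp, hf, hf', su.comm i]
        simp only [Preadditive.comp_add, Preadditive.add_comp, Category.assoc]
      · -- middle degree: n = 2 * i, so n is even and C.X i is zero
        have he : Even n := ⟨i, by omega⟩
        rw [Splits, if_pos he] at hC
        have hz : IsZero (C.X i) := by
          have : n / 2 = i := by obtain ⟨k, hk⟩ := he; omega
          rw [← this]; exact hC
        exact hz.eq_of_src _ _

end Aux

/-- For split chain complexes `C` and `D`, two chain maps `f, f' : C ⟶ D` are
chain homotopic if and only if their restrictions to the lower halves are chain homotopic and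
their restrictions to the upper halves are chain homotopic. -/
theorem split_chainMap_homotopic_iff (n : ℕ) (hn : 0 < n)
    (C D : ChainComplex (ModuleCat R) ℕ)
    (hCa : IsAdmissible n C) (hDa : IsAdmissible n D)
    (hC : Splits n C) (hD : Splits n D) (f f' : C ⟶ D) :
    Nonempty (Homotopy f f') ↔
      Nonempty (Homotopy (lowerMap n f) (lowerMap n f')) ∧
        Nonempty (Homotopy (upperMap n f) (upperMap n f')) := by
  constructor
  · rintro ⟨s⟩
    exact ⟨⟨homotopyLower n hD s⟩, ⟨homotopyUpper n hC s⟩⟩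
  · rintro ⟨⟨sl⟩, ⟨su⟩⟩
    exact ⟨homotopyOfHalves n hC sl su⟩
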